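/- Let L ≥ 1 be an integer and let p be any real polynomial of degree at most L achieving the best uniform approximation of φ on [0,1], i.e., sup_{x∈[0,1]} |p(x) − φ(x)| = E_L(φ,[0,1]). Then the constant term of p equals the approximation error: p(0) = E_L(φ,[0,1]). -/

import Mathlib

open Real

noncomputable section

/-- `φ(x) = x log (1/x)`, with `φ(0) = 0`. -/
def phi (x : ℝ) : ℝ := x * Real.log (1 / x)

/-- Best uniform polynomial approximation error of `f` on `[a,b]` by polynomials of
degree at most `L`. -/
def bestApproxError (L : ℕ) (f : ℝ → ℝ) (a b : ℝ) : ℝ :=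
  ⨅ p : {p : Polynomial ℝ // p.natDegree ≤ L},
    ⨆ x : Set.Icc a b, |f ↑x - Polynomial.eval (↑x : ℝ) p.1|

open Polynomial Set

/-- An alternating, strictly decreasing (head largest) list of points, alternating
between `P` and `N`, starting (at the head) in `P`. -/
def AltList (P N : Set ℝ) : List ℝ → Prop
  | [] => True
  | x :: l => x ∈ P ∧ (∀ y ∈ l, y < x) ∧ AltList N P l

lemma altList_nil (P N : Set ℝ) : AltList P N [] := trivial

lemma altList_cons {P N : Set ℝ} {x : ℝ} {l : List ℝ} :
    AltList P N (x :: l) ↔ x ∈ P ∧ (∀ y ∈ l, y < x) ∧ AltList N P l := Iff.rfl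

lemma altList_lt {P N : Set ℝ} {c : ℝ} (hP : ∀ x ∈ P, x < c) :
    ∀ {l : List ℝ}, AltList P N l → ∀ y ∈ l, y < c := by
  intro l
  cases l with
  | nil => intro _ y hy; exact absurd hy List.not_mem_nil
  | cons x s =>
    rintro ⟨hx, hlt, -⟩ y hy
    rcases List.mem_cons.mp hy with rfl | hm
    · exact hP y hx
    · exact (hlt y hm).trans (hP x hx)

lemma altList_mem : ∀ (l : List ℝ) (P N : Set ℝ), AltList P N l → ∀ y ∈ l, y ∈ P ∪ N := by
  intro l
  induction l with
  | nil => intro P N _ y hy; exact absurd hy List.not_mem_nil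
  | cons x s ih =>
    rintro P N ⟨hx, -, hs⟩ y hy
    rcases List.mem_cons.mp hy with rfl | hm
    · exact Or.inl hx
    · rcases ih N P hs y hm with h | h
      · exact Or.inr h
      · exact Or.inl h

lemma altList_pairwise : ∀ (l : List ℝ) (P N : Set ℝ), AltList P N l →
    l.Pairwise (fun a b => b < a) := by
  intro l
  induction l with
  | nil => intro _ _ _; exact List.Pairwise.nil
  | cons x s ih =>
    rintro P N ⟨-, hlt, hs⟩
    exact List.pairwise_cons.mpr ⟨hlt, ih N P hs⟩

lemma altList_conv (P N P' N' : Set ℝ) (t : ℝ) (hP : P' ⊆ P) (hP't : ∀ x ∈ P', x < t)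
    (hN : ∀ x ∈ N', x < t → x ∈ N) :
    ∀ l : List ℝ, (AltList P' N' l → AltList P N l) ∧
      ((∀ y ∈ l, y < t) → AltList N' P' l → AltList N P l) := by
  intro l
  induction l with
  | nil => exact ⟨fun _ => trivial, fun _ _ => trivial⟩
  | cons x s ih =>
    constructor
    · rintro ⟨hx, hlt, hs⟩
      exact ⟨hP hx, hlt, ih.2 (fun y hy => (hlt y hy).trans (hP't x hx)) hs⟩
    · rintro hyt ⟨hx, hlt, hs⟩
      exact ⟨hN x hx (hyt x List.mem_cons_self), hlt, ih.1 hs⟩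

/-- Main induction step for the separating-polynomial lemma, in the case where the
largest point of `P ∪ N` belongs to `P`. -/
lemma keystep (n : ℕ)
    (IH : ∀ P N : Set ℝ, IsCompact P → IsCompact N → (∀ x ∈ P, x ∉ N) →
      (∀ l : List ℝ, AltList P N l ∨ AltList N P l → l.length ≤ n) →
      ∃ r : Polynomial ℝ, r.natDegree ≤ n - 1 ∧ (∀ x ∈ P, 0 < r.eval x) ∧
        (∀ x ∈ N, r.eval x < 0))
    (P N : Set ℝ) (hPc : IsCompact P) (hNc : IsCompact N) (hdisj : ∀ x ∈ P, x ∉ N)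
    (hbound : ∀ l : List ℝ, AltList P N l ∨ AltList N P l → l.length ≤ n + 1)
    (hNne : N.Nonempty)
    (v : ℝ) (hvP : v ∈ P) (hvmax : ∀ y ∈ P ∪ N, y ≤ v) :
    ∃ r : Polynomial ℝ, r.natDegree ≤ n ∧ (∀ x ∈ P, 0 < r.eval x) ∧
      (∀ x ∈ N, r.eval x < 0) := by
  -- n ≥ 1
  obtain ⟨u0, hu0⟩ := hNne
  have hu0v : u0 < v :=
    lt_of_le_of_ne (hvmax u0 (Or.inr hu0)) (fun h => hdisj v hvP (h ▸ hu0))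
  have hn1 : 1 ≤ n := by
    have := hbound [v, u0] (Or.inl ⟨hvP, by
      intro y hy; rcases List.mem_cons.mp hy with rfl | hy
      · exact hu0v
      · exact absurd hy List.not_mem_nil, ⟨hu0, by simp, trivial⟩⟩)
    simpa using this
  -- largest point u of N, least point m of P above u
  obtain ⟨u, huN, huub⟩ := hNc.exists_isGreatest ⟨u0, hu0⟩
  have huub' : ∀ y ∈ N, y ≤ u := fun y hy => huub hy
  have huv : u < v := lt_of_le_of_ne (hvmax u (Or.inr huN)) (fun h => hdisj v hvP (h ▸ huN))
  have hDc : IsCompact (P ∩ Ici u) := hPc.inter_right isClosed_Ici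
  obtain ⟨m, hm, hmlb⟩ := hDc.exists_isLeast ⟨v, hvP, huv.le⟩
  have hmlb' : ∀ y ∈ P ∩ Ici u, m ≤ y := fun y hy => hmlb hy
  have hum : u < m := lt_of_le_of_ne hm.2 (fun h => hdisj m hm.1 (h ▸ huN))
  set t : ℝ := (u + m) / 2 with ht
  have htu : u < t := by simp only [ht]; linarith
  have htm : t < m := by simp only [ht]; linarith
  have hPlow : ∀ x ∈ P, x ≤ t → x < u := by
    intro x hx hxt
    by_contra hc
    exact absurd (le_trans (hmlb' x ⟨hx, not_lt.mp hc⟩) hxt) (not_le.mpr htm)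
  -- the reduced pair
  set P' : Set ℝ := P ∩ Iic t with hP'
  set N' : Set ℝ := N ∪ Icc t v with hN'
  have hP'c : IsCompact P' := hPc.inter_right isClosed_Iic
  have hN'c : IsCompact N' := hNc.union isCompact_Icc
  have hP'u : ∀ x ∈ P', x < u := fun x hx => hPlow x hx.1 hx.2
  have hP't : ∀ x ∈ P', x < t := fun x hx => (hP'u x hx).trans htu
  have hdisj' : ∀ x ∈ P', x ∉ N' := by
    rintro x hx (hxN | hxI)
    · exact hdisj x hx.1 hxN
    · exact absurd hxI.1 (not_le.mpr (hP't x hx))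
  have hNconv : ∀ x ∈ N', x < t → x ∈ N := by
    rintro x (hxN | hxI) hxt
    · exact hxN
    · exact absurd hxI.1 (not_le.mpr hxt)
  have hconv := altList_conv P N P' N' t inter_subset_left hP't hNconv
  have hbound' : ∀ l : List ℝ, AltList P' N' l ∨ AltList N' P' l → l.length ≤ n := by
    rintro l (hl | hl)
    · -- convert and extend by u, v
      have hlPN : AltList P N l := (hconv l).1 hl
      have hltu : ∀ y ∈ l, y < u := altList_lt hP'u hl
      have hbig : AltList P N (v :: u :: l) := by
        refine ⟨hvP, ?_, huN, hltu, hlPN⟩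
        intro y hy
        rcases List.mem_cons.mp hy with rfl | hy
        · exact huv
        · exact (hltu y hy).trans huv
      have := hbound _ (Or.inl hbig)
      simp only [List.length_cons] at this
      omega
    · cases l with
      | nil => exact Nat.zero_le n
      | cons h s =>
        obtain ⟨hh, hlth, hs⟩ := hl
        rcases hh with hhN | hhI
        · have hallt : ∀ y ∈ h :: s, y < t := by
            intro y hy
            rcases List.mem_cons.mp hy with rfl | hy
            · exact lt_of_le_of_lt (huub' y hhN) htu
            · exact (hlth y hy).trans (lt_of_le_of_lt (huub' h hhN) htu)
          have hlNP : AltList N P (h :: s) := (hconv (h :: s)).2 hallt ⟨Or.inl hhN, hlth, hs⟩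
          have hbig : AltList P N (v :: h :: s) := by
            refine ⟨hvP, ?_, hlNP⟩
            intro y hy
            rcases List.mem_cons.mp hy with rfl | hy
            · exact lt_of_le_of_lt (huub' y hhN) huv
            · exact (hlth y hy).trans (lt_of_le_of_lt (huub' h hhN) huv)
          have := hbound _ (Or.inl hbig)
          simp only [List.length_cons] at this ⊢
          omega
        · -- head in Icc t v, tail is a P'-chain
          have hsPN : AltList P N s := (hconv s).1 hs
          have hltu : ∀ y ∈ s, y < u := altList_lt hP'u hs
          have hbig : AltList P N (v :: u :: s) := by
            refine ⟨hvP, ?_, huN, hltu, hsPN⟩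
            intro y hy
            rcases List.mem_cons.mp hy with rfl | hy
            · exact huv
            · exact (hltu y hy).trans huv
          have := hbound _ (Or.inl hbig)
          simp only [List.length_cons] at this ⊢
          omega
  obtain ⟨rt, hrtdeg, hrtP, hrtN⟩ := IH P' N' hP'c hN'c hdisj' hbound'
  refine ⟨(C t - X) * rt, ?_, ?_, ?_⟩
  · refine (natDegree_mul_le).trans ?_
    have h1 : (C t - X : Polynomial ℝ).natDegree ≤ 1 := by
      refine (natDegree_sub_le _ _).trans ?_
      simp [natDegree_C, natDegree_X]
    omega
  · intro x hx
    rw [eval_mul, eval_sub, eval_C, eval_X]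
    by_cases hxt : x ≤ t
    · exact mul_pos (by linarith [hP't x ⟨hx, hxt⟩]) (hrtP x ⟨hx, hxt⟩)
    · push_neg at hxt
      have hxI : x ∈ Icc t v := ⟨hxt.le, hvmax x (Or.inl hx)⟩
      exact mul_pos_of_neg_of_neg (by linarith) (hrtN x (Or.inr hxI))
  · intro x hx
    rw [eval_mul, eval_sub, eval_C, eval_X]
    have hxu : x ≤ u := huub' x hx
    exact mul_neg_of_pos_of_neg (by linarith) (hrtN x (Or.inl hx))

/-- The separating polynomial lemma: if all alternating chains between disjoint compact
sets `P` and `N` have length at most `n`, then there is a polynomial of degree at most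
`n - 1` positive on `P` and negative on `N`. -/
lemma key : ∀ (n : ℕ) (P N : Set ℝ), IsCompact P → IsCompact N → (∀ x ∈ P, x ∉ N) →
    (∀ l : List ℝ, AltList P N l ∨ AltList N P l → l.length ≤ n) →
    ∃ r : Polynomial ℝ, r.natDegree ≤ n - 1 ∧ (∀ x ∈ P, 0 < r.eval x) ∧
      (∀ x ∈ N, r.eval x < 0) := by
  intro n
  induction n with
  | zero =>
    intro P N _ _ _ hbound
    have hP : ∀ x, x ∉ P := by
      intro x hx
      have := hbound [x] (Or.inl ⟨hx, by simp, trivial⟩)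
      simp at this
    have hN : ∀ x, x ∉ N := by
      intro x hx
      have := hbound [x] (Or.inr ⟨hx, by simp, trivial⟩)
      simp at this
    exact ⟨1, by simp, fun x hx => absurd hx (hP x), fun x hx => absurd hx (hN x)⟩
  | succ n IH =>
    intro P N hPc hNc hdisj hbound
    rcases N.eq_empty_or_nonempty with hN | hNne
    · refine ⟨1, by simp, fun x _ => by simp, fun x hx => ?_⟩
      rw [hN] at hx; exact absurd hx (notMem_empty x)
    rcases P.eq_empty_or_nonempty with hP | hPne
    · refine ⟨-1, by simp, fun x hx => ?_, fun x _ => by simp⟩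
      rw [hP] at hx; exact absurd hx (notMem_empty x)
    obtain ⟨v, hvmem, hvub⟩ := (hPc.union hNc).exists_isGreatest (hPne.mono subset_union_left)
    have hvub' : ∀ y ∈ P ∪ N, y ≤ v := fun y hy => hvub hy
    have hns : n + 1 - 1 = n := rfl
    rcases hvmem with hvP | hvN
    · rw [hns]
      exact keystep n IH P N hPc hNc hdisj hbound hNne v hvP hvub'
    · -- symmetric case: apply keystep with P and N swapped
      have IH' : ∀ A B : Set ℝ, IsCompact A → IsCompact B → (∀ x ∈ A, x ∉ B) →
          (∀ l : List ℝ, AltList A B l ∨ AltList B A l → l.length ≤ n) →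
          ∃ r : Polynomial ℝ, r.natDegree ≤ n - 1 ∧ (∀ x ∈ A, 0 < r.eval x) ∧
            (∀ x ∈ B, r.eval x < 0) := by
        intro A B hA hB hd hb
        obtain ⟨r, h1, h2, h3⟩ := IH B A hB hA (fun x hx hxA => hd x hxA hx)
          (fun l hl => hb l hl.symm)
        refine ⟨-r, by simpa using h1, fun x hx => ?_, fun x hx => ?_⟩
        · rw [eval_neg]; linarith [h3 x hx]
        · rw [eval_neg]; linarith [h2 x hx]
      obtain ⟨r, h1, h2, h3⟩ := keystep n IH' N P hNc hPc
        (fun x hx hxP => hdisj x hxP hx) (fun l hl => hbound l hl.symm) hPne v hvN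
        (fun y hy => hvub' y hy.symm)
      refine ⟨-r, by rw [hns]; simpa using h1, fun x hx => ?_, fun x hx => ?_⟩
      · rw [eval_neg]; linarith [h3 x hx]
      · rw [eval_neg]; linarith [h2 x hx]

/-- From a decreasing chain of critical points of `x ↦ p'(x) + log x + 1` in `(0,1]`,
Rolle's theorem produces an equally long (minus one) decreasing chain of roots of
`X * p'' + 1`. -/
lemma rolle_chain (p : Polynomial ℝ) :
    ∀ (l : List ℝ) (a : ℝ),
      (∀ y ∈ a :: l, y ∈ Set.Ioc (0:ℝ) 1 ∧
        Polynomial.eval y (Polynomial.derivative p) + (Real.log y + 1) = 0) →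
      l.Pairwise (fun a b => b < a) → (∀ y ∈ l, y < a) →
      ∃ rl : List ℝ, rl.length = l.length ∧ rl.Pairwise (fun a b => b < a) ∧
        ∀ z ∈ rl, z < a ∧
          Polynomial.eval z (Polynomial.X * Polynomial.derivative (Polynomial.derivative p)
            + 1) = 0 := by
  intro l
  induction l with
  | nil =>
    intro a _ _ _
    exact ⟨[], rfl, List.Pairwise.nil, by simp⟩
  | cons b s ih =>
    intro a hmem hpw hlt
    obtain ⟨ha01, ha'⟩ := hmem a List.mem_cons_self
    obtain ⟨hb01, hb'⟩ := hmem b (List.mem_cons.mpr (Or.inr List.mem_cons_self))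
    have hba : b < a := hlt b List.mem_cons_self
    have hb0 : (0:ℝ) < b := hb01.1
    -- Rolle for e' on [b, a]
    have hcont : ContinuousOn
        (fun x => Polynomial.eval x (Polynomial.derivative p) + (Real.log x + 1))
        (Icc b a) := by
      refine ContinuousOn.add ((Polynomial.derivative p).continuous.continuousOn) ?_
      refine ContinuousOn.add ?_ continuousOn_const
      exact Real.continuousOn_log.mono (fun x hx => by
        simp only [mem_compl_iff, mem_singleton_iff]
        exact ne_of_gt (lt_of_lt_of_le hb0 hx.1))
    have hderiv : ∀ x ∈ Ioo b a, HasDerivAt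
        (fun x => Polynomial.eval x (Polynomial.derivative p) + (Real.log x + 1))
        (Polynomial.eval x (Polynomial.derivative (Polynomial.derivative p)) + x⁻¹) x := by
      intro x hx
      have hx0 : x ≠ 0 := ne_of_gt (lt_trans hb0 hx.1)
      exact ((Polynomial.derivative p).hasDerivAt x).add ((Real.hasDerivAt_log hx0).add_const 1)
    obtain ⟨c, hc, hc0⟩ := exists_hasDerivAt_eq_zero hba hcont (by rw [hb', ha']) hderiv
    have hc0' : (0:ℝ) < c := lt_trans hb0 hc.1
    have hgc : Polynomial.eval c
        (Polynomial.X * Polynomial.derivative (Polynomial.derivative p) + 1) = 0 := by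
      have h1 : Polynomial.eval c (Polynomial.derivative (Polynomial.derivative p)) = -c⁻¹ := by
        linarith
      rw [Polynomial.eval_add, Polynomial.eval_mul, Polynomial.eval_X, Polynomial.eval_one, h1]
      field_simp
      norm_num
    obtain ⟨rl, hlen, hpw', hall⟩ := ih b
      (fun y hy => hmem y (List.mem_cons.mpr (Or.inr hy)))
      (List.pairwise_cons.mp hpw).2
      (fun y hy => (List.pairwise_cons.mp hpw).1 y hy)
    refine ⟨c :: rl, by simp [hlen], List.pairwise_cons.mpr ⟨?_, hpw'⟩, ?_⟩
    · intro z hz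
      exact lt_trans ((hall z hz).1) hc.1
    · intro z hz
      rcases List.mem_cons.mp hz with rfl | hz
      · exact ⟨hc.2, hgc⟩
      · exact ⟨lt_trans (hall z hz).1 hba, (hall z hz).2⟩

/-- A strictly decreasing list of roots of a nonzero polynomial is no longer than its degree. -/
lemma count_roots_of_list (g : Polynomial ℝ) (hg : g ≠ 0) :
    ∀ l : List ℝ, l.Pairwise (fun a b => b < a) → (∀ z ∈ l, Polynomial.eval z g = 0) →
      l.length ≤ g.natDegree := by
  intro l hpw hroot
  have hirr : IsIrrefl ℝ (fun a b : ℝ => b < a) := ⟨fun a => lt_irrefl a⟩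
  have hnodup : l.Nodup := @List.Pairwise.nodup _ _ _ hirr hpw
  have hsub : l.toFinset.val ⊆ g.roots := by
    intro z hz
    have hzl : z ∈ l := List.mem_toFinset.mp hz
    exact (Polynomial.mem_roots hg).mpr (hroot z hzl)
  have h1 : l.toFinset.card ≤ g.natDegree := Polynomial.card_le_degree_of_subset_roots hsub
  rwa [List.toFinset_card_of_nodup hnodup] at h1

/-- Maximum attainment for the sup over `Icc 0 1`. -/
lemma sup_attain (f : ℝ → ℝ) (hf : ContinuousOn f (Set.Icc 0 1)) :
    ∃ x₀ ∈ Set.Icc (0:ℝ) 1, (⨆ x : Set.Icc (0:ℝ) 1, f ↑x) = f x₀ ∧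
      ∀ y ∈ Set.Icc (0:ℝ) 1, f y ≤ f x₀ := by
  obtain ⟨x₀, hx₀, hmax⟩ := isCompact_Icc.exists_isMaxOn (Set.nonempty_Icc.mpr zero_le_one) hf
  have hmax' : ∀ y ∈ Set.Icc (0:ℝ) 1, f y ≤ f x₀ := fun y hy => hmax hy
  haveI : Nonempty (Set.Icc (0:ℝ) 1) := ⟨⟨0, by norm_num⟩⟩
  refine ⟨x₀, hx₀, le_antisymm ?_ ?_, hmax'⟩
  · exact ciSup_le (fun x => hmax' x x.2)
  · have hbdd : BddAbove (Set.range fun x : Set.Icc (0:ℝ) 1 => f ↑x) :=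
      ⟨f x₀, fun z hz => by obtain ⟨y, rfl⟩ := hz; exact hmax' y y.2⟩
    exact le_ciSup hbdd ⟨x₀, hx₀⟩

/-- the constant term of the best polynomial approximant of `φ` on `[0,1]`
equals the approximation error. -/
theorem best_poly_constant_term (L : ℕ) (hL : 1 ≤ L) (p : Polynomial ℝ)
    (hdeg : p.natDegree ≤ L)
    (hbest : (⨆ x : Set.Icc (0 : ℝ) 1, |Polynomial.eval (↑x : ℝ) p - phi ↑x|)
              = bestApproxError L phi 0 1) :
    Polynomial.eval 0 p = bestApproxError L phi 0 1 := by
  classical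
  set E := bestApproxError L phi 0 1 with hEdef
  set e : ℝ → ℝ := fun x => Polynomial.eval x p - phi x with he_def
  have hphi : ∀ x : ℝ, phi x = -(x * Real.log x) := by
    intro x
    simp only [phi, one_div, Real.log_inv]
    ring
  have he_eq : ∀ x : ℝ, e x = Polynomial.eval x p + x * Real.log x := by
    intro x
    rw [he_def]
    simp only
    rw [hphi]
    ring
  have hefun : e = fun x : ℝ => Polynomial.eval x p + x * Real.log x := funext he_eq
  have hecont : Continuous e := by
    rw [hefun]
    exact (p.continuous).add Real.continuous_mul_log
  have hsup : (⨆ x : Set.Icc (0:ℝ) 1, |e ↑x|) = E := hbest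
  obtain ⟨xh, hxh, hsupeq, hub⟩ :=
    sup_attain (fun x => |e x|) (hecont.abs.continuousOn)
  have hExh : E = |e xh| := by rw [← hsup, hsupeq]
  have hle : ∀ y ∈ Set.Icc (0:ℝ) 1, |e y| ≤ E := fun y hy => hExh ▸ hub y hy
  have h0Icc : (0:ℝ) ∈ Set.Icc (0:ℝ) 1 := ⟨le_refl 0, zero_le_one⟩
  have he0 : e 0 = Polynomial.eval 0 p := by
    rw [he_def]; simp [phi]
  have h0le : |e 0| ≤ E := hle 0 h0Icc
  have hE0 : 0 ≤ E := le_trans (abs_nonneg _) h0le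
  -- lower bound: E is at most the error of any degree-≤L polynomial
  have hlow : ∀ q : Polynomial ℝ, q.natDegree ≤ L →
      E ≤ ⨆ x : Set.Icc (0:ℝ) 1, |phi ↑x - Polynomial.eval (↑x:ℝ) q| := by
    intro q hq
    have hbdd : BddBelow (Set.range fun r : {r : Polynomial ℝ // r.natDegree ≤ L} =>
        ⨆ x : Set.Icc (0:ℝ) 1, |phi ↑x - Polynomial.eval (↑x:ℝ) r.1|) := by
      refine ⟨0, ?_⟩
      rintro z ⟨r, rfl⟩
      exact Real.iSup_nonneg (fun x => abs_nonneg _)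
    exact ciInf_le hbdd ⟨q, hq⟩
  clear_value E e
  rw [← he0]
  rcases lt_or_eq_of_le h0le with hlt | heq
  -- MAIN CASE: |e 0| < E
  · exfalso
    have hEpos : 0 < E := lt_of_le_of_lt (abs_nonneg _) hlt
    set P : Set ℝ := Set.Icc (0:ℝ) 1 ∩ {x | e x = E} with hPdef
    set N : Set ℝ := Set.Icc (0:ℝ) 1 ∩ {x | e x = -E} with hNdef
    have hPc : IsCompact P :=
      isCompact_Icc.inter_right (isClosed_eq hecont continuous_const)
    have hNc : IsCompact N :=
      isCompact_Icc.inter_right (isClosed_eq hecont continuous_const)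
    have hdisjPN : ∀ x ∈ P, x ∉ N := by
      rintro x ⟨-, hx1⟩ ⟨-, hx2⟩
      simp only [mem_setOf_eq] at hx1 hx2
      rw [hx1] at hx2
      linarith
    have hchain : ∀ l : List ℝ, AltList P N l ∨ AltList N P l → l.length ≤ L + 1 := by
      intro l hl
      by_contra hc
      push_neg at hc
      have hmem : ∀ y ∈ l, y ∈ P ∪ N := by
        rcases hl with h | h
        · exact altList_mem l P N h
        · intro y hy
          rcases altList_mem l N P h y hy with h' | h'
          · exact Or.inr h'
          · exact Or.inl h'
      have hpw : l.Pairwise (fun a b => b < a) := by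
        rcases hl with h | h
        · exact altList_pairwise l P N h
        · exact altList_pairwise l N P h
      have hmem' : ∀ y ∈ l, y ∈ Set.Ioc (0:ℝ) 1 := by
        intro y hy
        have hyS := hmem y hy
        have hyIcc : y ∈ Set.Icc (0:ℝ) 1 := by
          rcases hyS with h' | h' <;> exact h'.1
        have hyabs : |e y| = E := by
          rcases hyS with h' | h'
          · have h2 : e y = E := h'.2
            rw [h2]; exact abs_of_nonneg hE0
          · have h2 : e y = -E := h'.2
            rw [h2, abs_neg]; exact abs_of_nonneg hE0
        have hy0 : y ≠ 0 := by
          intro h0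
          rw [h0] at hyabs
          rw [hyabs] at hlt
          exact lt_irrefl _ hlt
        exact ⟨lt_of_le_of_ne hyIcc.1 (Ne.symm hy0), hyIcc.2⟩
      have hcrit : ∀ y ∈ l, y ∈ Set.Ioo (0:ℝ) 1 →
          Polynomial.eval y (Polynomial.derivative p) + (Real.log y + 1) = 0 := by
        intro y hy hyo
        have hd : HasDerivAt e
            (Polynomial.eval y (Polynomial.derivative p) + (Real.log y + 1)) y := by
          rw [hefun]
          exact (p.hasDerivAt y).add (Real.hasDerivAt_mul_log (ne_of_gt hyo.1))
        have hIccnhds : Set.Icc (0:ℝ) 1 ∈ nhds y := Icc_mem_nhds hyo.1 hyo.2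
        rcases hmem y hy with hyP | hyN
        · have hmax : IsMaxOn e (Set.Icc (0:ℝ) 1) y := by
            intro z hz
            have h2 : e y = E := hyP.2
            show e z ≤ e y
            rw [h2]
            exact le_trans (le_abs_self _) (hle z hz)
          exact (hmax.isLocalMax hIccnhds).hasDerivAt_eq_zero hd
        · have hmin : IsMinOn e (Set.Icc (0:ℝ) 1) y := by
            intro z hz
            have h2 : e y = -E := hyN.2
            show e y ≤ e z
            rw [h2]
            exact le_trans (neg_le_neg (hle z hz)) (neg_abs_le _)
          exact (hmin.isLocalMin hIccnhds).hasDerivAt_eq_zero hd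
      obtain ⟨a, l1, rfl⟩ : ∃ a l1, l = a :: l1 := by
        cases l with
        | nil => simp at hc
        | cons a l1 => exact ⟨a, l1, rfl⟩
      obtain ⟨b, t, rfl⟩ : ∃ b t, l1 = b :: t := by
        cases l1 with
        | nil => simp only [List.length_cons, List.length_nil] at hc; omega
        | cons b t => exact ⟨b, t, rfl⟩
      have htlen : L ≤ t.length := by
        simp only [List.length_cons] at hc
        omega
      have ha1 : a ≤ 1 := (hmem' a List.mem_cons_self).2
      have hpwcons := List.pairwise_cons.mp hpw
      have hlta : ∀ y ∈ b :: t, y < a := hpwcons.1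
      have hIoo : ∀ y ∈ b :: t, y ∈ Set.Ioo (0:ℝ) 1 := by
        intro y hy
        have h1 := hmem' y (List.mem_cons.mpr (Or.inr hy))
        exact ⟨h1.1, lt_of_lt_of_le (hlta y hy) ha1⟩
      have hmemcrit : ∀ y ∈ b :: t, y ∈ Set.Ioc (0:ℝ) 1 ∧
          Polynomial.eval y (Polynomial.derivative p) + (Real.log y + 1) = 0 := by
        intro y hy
        exact ⟨Set.Ioo_subset_Ioc_self (hIoo y hy),
          hcrit y (List.mem_cons.mpr (Or.inr hy)) (hIoo y hy)⟩
      have hpwbt := List.pairwise_cons.mp hpwcons.2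
      obtain ⟨rl, hlen, hpwrl, hall⟩ := rolle_chain p t b hmemcrit hpwbt.2 hpwbt.1
      set g : Polynomial ℝ :=
        Polynomial.X * Polynomial.derivative (Polynomial.derivative p) + 1 with hgdef
      have hg0 : g ≠ 0 := by
        intro h
        have hco : g.coeff 0 = 1 := by
          rw [hgdef, Polynomial.coeff_add, Polynomial.mul_coeff_zero,
            Polynomial.coeff_X_zero, Polynomial.coeff_one_zero, zero_mul, zero_add]
        rw [h] at hco
        simp at hco
      have hgdeg : g.natDegree ≤ L - 1 := by
        by_cases hpp : Polynomial.derivative (Polynomial.derivative p) = 0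
        · rw [hgdef, hpp, mul_zero, zero_add]
          simp
        · have h1 : Polynomial.derivative p ≠ 0 := by
            intro h
            exact hpp (by rw [h]; simp)
          have h2 : p.natDegree ≠ 0 := by
            intro h
            obtain ⟨c, hc⟩ := Polynomial.natDegree_eq_zero.mp h
            rw [← hc] at h1
            simp at h1
          have h3 : (Polynomial.derivative p).natDegree < p.natDegree :=
            Polynomial.natDegree_derivative_lt h2
          have h4 : (Polynomial.derivative p).natDegree ≠ 0 := by
            intro h
            obtain ⟨c, hc⟩ := Polynomial.natDegree_eq_zero.mp h
            exact hpp (by rw [← hc]; simp)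
          have h5 : (Polynomial.derivative (Polynomial.derivative p)).natDegree <
              (Polynomial.derivative p).natDegree := Polynomial.natDegree_derivative_lt h4
          have h6 := Polynomial.natDegree_add_le
            (Polynomial.X * Polynomial.derivative (Polynomial.derivative p))
            (1 : Polynomial ℝ)
          have h7 : (Polynomial.X *
              Polynomial.derivative (Polynomial.derivative p)).natDegree ≤
              1 + (Polynomial.derivative (Polynomial.derivative p)).natDegree := by
            refine le_trans Polynomial.natDegree_mul_le ?_
            simp [Polynomial.natDegree_X]
          rw [Polynomial.natDegree_one] at h6
          rw [hgdef]
          omega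
      have hcount : rl.length ≤ g.natDegree :=
        count_roots_of_list g hg0 rl hpwrl (fun z hz => (hall z hz).2)
      omega
    obtain ⟨r, hrdeg, hrP, hrN⟩ := key (L + 1) P N hPc hNc hdisjPN hchain
    have hrdeg' : r.natDegree ≤ L := hrdeg
    obtain ⟨xR, hxR, hReq, hRub⟩ :=
      sup_attain (fun x => |Polynomial.eval x r|) ((r.continuous.abs).continuousOn)
    set M := |Polynomial.eval xR r| with hMdef
    have hM0 : 0 ≤ M := abs_nonneg _
    clear_value M
    set K : Set ℝ := Set.Icc (0:ℝ) 1 ∩ {x | e x * Polynomial.eval x r ≤ 0} with hKdef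
    have hKc : IsCompact K :=
      isCompact_Icc.inter_right (isClosed_le (hecont.mul r.continuous) continuous_const)
    have hE'ex : ∃ E' : ℝ, 0 ≤ E' ∧ E' < E ∧ ∀ x ∈ K, |e x| ≤ E' := by
      rcases K.eq_empty_or_nonempty with hK | hKne
      · exact ⟨0, le_refl 0, hEpos, by rw [hK]; intro x hx; exact absurd hx (notMem_empty x)⟩
      · obtain ⟨xK, hxK, hKmax⟩ := hKc.exists_isMaxOn hKne (hecont.abs.continuousOn)
        refine ⟨|e xK|, abs_nonneg _, ?_, fun x hx => hKmax hx⟩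
        rcases lt_or_eq_of_le (hle xK hxK.1) with h | h
        · exact h
        · exfalso
          have hprod : e xK * Polynomial.eval xK r ≤ 0 := hxK.2
          rcases (abs_eq hE0).mp h with h' | h'
          · have hrpos := hrP xK ⟨hxK.1, h'⟩
            rw [h'] at hprod
            linarith [mul_pos hEpos hrpos]
          · have hrneg := hrN xK ⟨hxK.1, h'⟩
            rw [h'] at hprod
            linarith [mul_pos_of_neg_of_neg (show -E < 0 by linarith) hrneg]
    obtain ⟨E', hE'0, hE'lt, hE'ub⟩ := hE'ex
    set ε : ℝ := min (E - E') E / (2 * (M + 1)) with hεdef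
    clear_value ε
    have hmin_pos : 0 < min (E - E') E := lt_min (show (0:ℝ) < E - E' by linarith) hEpos
    have hεpos : 0 < ε := by
      rw [hεdef]
      exact div_pos hmin_pos (by linarith)
    have hne : (2 * (M + 1) : ℝ) ≠ 0 := ne_of_gt (by linarith)
    have h1 : ε * (2 * (M + 1)) = min (E - E') E := by
      rw [hεdef]
      exact div_mul_cancel₀ _ hne
    have h2 : 2 * (ε * M) + 2 * ε = min (E - E') E := by rw [← h1]; ring
    have hεM1 : ε * M < E - E' :=
      by linarith [min_le_left (E - E') E]
    have hεM2 : ε * M < E :=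
      by linarith [min_le_right (E - E') E]
    have hpt : ∀ x ∈ Set.Icc (0:ℝ) 1, |e x - ε * Polynomial.eval x r| < E := by
      intro x hx
      have hrM : |Polynomial.eval x r| ≤ M := hRub x hx
      by_cases hxK : e x * Polynomial.eval x r ≤ 0
      · have hxKmem : x ∈ K := ⟨hx, hxK⟩
        have h1 : |e x - ε * Polynomial.eval x r| ≤ |e x| + ε * |Polynomial.eval x r| := by
          refine le_trans (abs_sub _ _) ?_
          rw [abs_mul, abs_of_pos hεpos]
        have h2 : ε * |Polynomial.eval x r| ≤ ε * M :=
          mul_le_mul_of_nonneg_left hrM hεpos.le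
        have h3 := hE'ub x hxKmem
        linarith
      · push_neg at hxK
        rw [abs_lt]
        have habs := abs_le.mp (hle x hx)
        rcases mul_pos_iff.mp hxK with ⟨hpos, hrpos⟩ | ⟨hneg, hrneg⟩
        · have hrabs : Polynomial.eval x r ≤ M := le_trans (le_abs_self _) hrM
          have h4 : ε * Polynomial.eval x r ≤ ε * M :=
            mul_le_mul_of_nonneg_left hrabs hεpos.le
          have h5 : 0 < ε * Polynomial.eval x r := mul_pos hεpos hrpos
          exact ⟨by linarith [habs.1], by linarith [habs.2]⟩
        · have hrabs : -Polynomial.eval x r ≤ M := le_trans (neg_le_abs _) hrM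
          have h4 : ε * (-Polynomial.eval x r) ≤ ε * M :=
            mul_le_mul_of_nonneg_left hrabs hεpos.le
          have h5 : 0 < ε * (-Polynomial.eval x r) :=
            mul_pos hεpos (neg_pos.mpr hrneg)
          exact ⟨by linarith [habs.1], by linarith [habs.2]⟩
    set q : Polynomial ℝ := p - Polynomial.C ε * r with hqdef
    have hqdeg : q.natDegree ≤ L := by
      refine le_trans (Polynomial.natDegree_sub_le _ _) (max_le hdeg ?_)
      refine le_trans Polynomial.natDegree_mul_le ?_
      simp only [Polynomial.natDegree_C, zero_add]
      exact hrdeg'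
    have hlowq := hlow q hqdeg
    have hphicont : Continuous phi := by
      have : Continuous fun x : ℝ => -(x * Real.log x) := Real.continuous_mul_log.neg
      have hfun : phi = fun x : ℝ => -(x * Real.log x) := funext hphi
      rw [hfun]; exact this
    obtain ⟨xq, hxq, hqeq, hqub⟩ :=
      sup_attain (fun x => |phi x - Polynomial.eval x q|)
        (((hphicont.sub q.continuous).abs).continuousOn)
    rw [hqeq] at hlowq
    have hevalq : |phi xq - Polynomial.eval xq q| = |e xq - ε * Polynomial.eval xq r| := by
      have h1 : Polynomial.eval xq q =
          Polynomial.eval xq p - ε * Polynomial.eval xq r := by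
        rw [hqdef]
        simp [Polynomial.eval_sub, Polynomial.eval_mul, Polynomial.eval_C]
      rw [h1]
      have h2 : phi xq - (Polynomial.eval xq p - ε * Polynomial.eval xq r) =
          -(e xq - ε * Polynomial.eval xq r) := by
        rw [he_def]; simp only; ring
      rw [h2, abs_neg]
    rw [hevalq] at hlowq
    exact lt_irrefl E (lt_of_le_of_lt hlowq (hpt xq hxq))
  -- BOUNDARY CASE: |e 0| = E
  · rcases (abs_eq hE0).mp heq with h' | h'
    · exact h'
    · rcases eq_or_lt_of_le hE0 with hE0' | hEpos
      · rw [h', ← hE0']; simp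
      · exfalso
        -- e decreases strictly just right of 0, contradicting e 0 = -E
        have hXdvd : Polynomial.X ∣ (p - Polynomial.C (Polynomial.eval 0 p)) := by
          rw [Polynomial.X_dvd_iff]
          simp [Polynomial.coeff_zero_eq_eval_zero]
        obtain ⟨s, hsX⟩ := hXdvd
        have heval : ∀ x : ℝ, Polynomial.eval x p =
            Polynomial.eval 0 p + x * Polynomial.eval x s := by
          intro x
          have := congrArg (Polynomial.eval x) hsX
          simp only [Polynomial.eval_sub, Polynomial.eval_C, Polynomial.eval_mul,
            Polynomial.eval_X] at this
          linarith
        obtain ⟨xM, hxM, hMeq, hMub⟩ :=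
          sup_attain (fun x => |Polynomial.eval x s|) ((s.continuous.abs).continuousOn)
        set M := |Polynomial.eval xM s| with hMdef
        have hM0 : 0 ≤ M := abs_nonneg _
        clear_value M
        set x0 : ℝ := Real.exp (-(M + 2)) with hx0def
        have hx0pos : 0 < x0 := Real.exp_pos _
        have hx0le : x0 ≤ 1 := Real.exp_le_one_iff.mpr (by linarith)
        have hx0Icc : x0 ∈ Set.Icc (0:ℝ) 1 := ⟨hx0pos.le, hx0le⟩
        have hlogx0 : Real.log x0 = -(M + 2) := Real.log_exp _
        have hs_le : Polynomial.eval x0 s ≤ M :=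
          le_trans (le_abs_self _) (hMub x0 hx0Icc)
        have hp0 : Polynomial.eval 0 p = -E := by rw [← he0]; exact h'
        have hex0 : e x0 ≤ -E - x0 := by
          have h1 : e x0 = Polynomial.eval 0 p + x0 * (Polynomial.eval x0 s + Real.log x0) := by
            rw [he_eq, heval x0]; ring
          rw [h1, hp0, hlogx0]
          nlinarith
        have h2 : -E ≤ e x0 := (abs_le.mp (hle x0 hx0Icc)).1
        linarith
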